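/- Let A be a commutative ℚ-algebra with a derivation d : A → A, and let D : A → A be another derivation, both extended coefficientwise to A[w,w⁻¹]. Suppose z, z̄, H ∈ A[w,w⁻¹] satisfy the string equation {z, z̄} = 1 and the flow equations D z = {H, z}, D z̄ = {H, z̄} (brackets taken with respect to d). Define Q := (1/2)·( c₋₁(z̄·∂_w z) − c₋₁(z·∂_w z̄) ) ∈ A. Then D(Q) = 0; i.e., the Casimir Q is conserved by every 2dToda flow constrained by the string equation. -/

import Mathlib

open LaurentPolynomial

/-- The derivation `d : A → A` extended coefficientwise to Laurent polynomials
(so that `d w = 0`). -/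
noncomputable def dmap {A : Type*} [CommRing A] (d : A → A) (f : LaurentPolynomial A) :
    LaurentPolynomial A :=
  f.coeff.sum fun n a => C (d a) * T n

/-- The formal derivative `∂_w` on Laurent polynomials. -/
noncomputable def wderiv {A : Type*} [CommRing A] (f : LaurentPolynomial A) :
    LaurentPolynomial A :=
  f.coeff.sum fun n a => C (n • a) * T (n - 1)

/-- The Lax–Poisson bracket `{f,g} = w·(∂_w f)·(d g) − w·(d f)·(∂_w g)`. -/
noncomputable def lax {A : Type*} [CommRing A] (d : A → A) (f g : LaurentPolynomial A) :
    LaurentPolynomial A :=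
  T 1 * wderiv f * dmap d g - T 1 * dmap d f * wderiv g

section Aux

variable {A : Type*} [CommRing A]

lemma dmap_single (δ : A → A) (h0 : δ 0 = 0) (a : A) (n : ℤ) :
    dmap δ (C a * T n) = C (δ a) * T n := by
  unfold dmap
  rw [← single_eq_C_mul_T a n, AddMonoidAlgebra.coeff_single, Finsupp.sum_single_index]
  rw [h0]
  simp

lemma dmap_add (δ : A → A) (h0 : δ 0 = 0) (hadd : ∀ a b, δ (a + b) = δ a + δ b)
    (f g : LaurentPolynomial A) : dmap δ (f + g) = dmap δ f + dmap δ g := by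
  unfold dmap
  rw [AddMonoidAlgebra.coeff_add]
  exact Finsupp.sum_add_index' (fun n => by rw [h0]; simp)
    (fun n a b => by rw [hadd, map_add, add_mul])

lemma wderiv_single (a : A) (n : ℤ) :
    wderiv (C a * T n) = C (n • a) * T (n - 1) := by
  rw [← single_eq_C_mul_T]
  unfold wderiv
  rw [AddMonoidAlgebra.coeff_single]
  exact Finsupp.sum_single_index (by simp [← single_eq_C_mul_T])

lemma wderiv_add (f g : LaurentPolynomial A) :
    wderiv (f + g) = wderiv f + wderiv g := by
  unfold wderiv
  rw [AddMonoidAlgebra.coeff_add]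
  exact Finsupp.sum_add_index' (fun n => by simp)
    (fun n a b => by rw [smul_add, map_add, add_mul])

lemma wderiv_sub (f g : LaurentPolynomial A) :
    wderiv (f - g) = wderiv f - wderiv g := by
  have h := wderiv_add (f - g) g
  rw [sub_add_cancel] at h
  rw [h]; ring

lemma wderiv_mul (f g : LaurentPolynomial A) :
    wderiv (f * g) = f * wderiv g + wderiv f * g := by
  induction f using LaurentPolynomial.induction_on' with
  | add p q hp hq =>
    rw [add_mul, wderiv_add, hp, hq, wderiv_add]; ring
  | C_mul_T n a =>
    induction g using LaurentPolynomial.induction_on' with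
    | add p q hp hq =>
      rw [mul_add, wderiv_add, hp, hq, wderiv_add]; ring
    | C_mul_T m b =>
      have h1 : (C a * T n) * (C b * T m) = C (a * b) * T (n + m) := by
        rw [map_mul, T_add]; ring
      rw [h1, wderiv_single, wderiv_single, wderiv_single]
      have h2 : (n + m) • (a * b) = a * (m • b) + (n • a) * b := by
        rw [add_smul, mul_smul_comm, smul_mul_assoc]; ring
      rw [h2, map_add, add_mul]
      congr 1
      · rw [map_mul]
        have : n + m - 1 = n + (m - 1) := by ring
        rw [this, T_add]; ring
      · rw [map_mul]
        have : n + m - 1 = (n - 1) + m := by ring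
        rw [this, T_add]; ring

lemma dmap_mul (δ : A → A) (h0 : δ 0 = 0) (hadd : ∀ a b, δ (a + b) = δ a + δ b)
    (hmul : ∀ a b, δ (a * b) = a * δ b + δ a * b) (f g : LaurentPolynomial A) :
    dmap δ (f * g) = f * dmap δ g + dmap δ f * g := by
  induction f using LaurentPolynomial.induction_on' with
  | add p q hp hq =>
    rw [add_mul, dmap_add δ h0 hadd, hp, hq, dmap_add δ h0 hadd]; ring
  | C_mul_T n a =>
    induction g using LaurentPolynomial.induction_on' with
    | add p q hp hq =>
      rw [mul_add, dmap_add δ h0 hadd, hp, hq, dmap_add δ h0 hadd]; ring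
    | C_mul_T m b =>
      have h1 : (C a * T n) * (C b * T m) = C (a * b) * T (n + m) := by
        rw [map_mul, T_add]; ring
      rw [h1, dmap_single δ h0, dmap_single δ h0, dmap_single δ h0, hmul, map_add, T_add,
        map_mul, map_mul]
      ring

lemma dmap_wderiv (δ : A → A) (h0 : δ 0 = 0) (hadd : ∀ a b, δ (a + b) = δ a + δ b)
    (f : LaurentPolynomial A) : dmap δ (wderiv f) = wderiv (dmap δ f) := by
  have hz : ∀ (n : ℤ) (a : A), δ (n • a) = n • δ a := fun n a =>
    map_zsmul (AddMonoidHom.mk' δ hadd) n a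
  induction f using LaurentPolynomial.induction_on' with
  | add p q hp hq =>
    rw [wderiv_add, dmap_add δ h0 hadd, hp, hq, dmap_add δ h0 hadd, wderiv_add]
  | C_mul_T n a =>
    rw [wderiv_single, dmap_single δ h0, dmap_single δ h0, wderiv_single, hz]

lemma dmap_apply (δ : A → A) (h0 : δ 0 = 0) (f : LaurentPolynomial A) (m : ℤ) :
    (dmap δ f).coeff m = δ (f.coeff m) := by
  unfold dmap
  simp_rw [← single_eq_C_mul_T]
  rw [AddMonoidAlgebra.coeff_finsuppSum, Finsupp.sum_apply]
  unfold Finsupp.sum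
  simp_rw [AddMonoidAlgebra.coeff_single, Finsupp.single_apply]
  rw [Finset.sum_ite_eq' f.coeff.support m (fun n => δ (f.coeff n))]
  split_ifs with h
  · rfl
  · rw [Finsupp.notMem_support_iff.mp h, h0]

lemma wderiv_residue (f : LaurentPolynomial A) : (wderiv f).coeff (-1 : ℤ) = 0 := by
  unfold wderiv
  simp_rw [← single_eq_C_mul_T]
  rw [AddMonoidAlgebra.coeff_finsuppSum, Finsupp.sum_apply]
  unfold Finsupp.sum
  apply Finset.sum_eq_zero
  intro n _
  simp only [AddMonoidAlgebra.coeff_single, Finsupp.single_apply]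
  split_ifs with h
  · have hn : n = 0 := by omega
    simp [hn]
  · rfl

end Aux

/-- the Casimir `Q = (1/2)(c₋₁(z̄·∂_w z) − c₋₁(z·∂_w z̄))` is conserved
by every 2dToda flow `D z = {H,z}`, `D z̄ = {H,z̄}` constrained by the string
equation `{z,z̄} = 1`.  Here `c₋₁` is the `w⁻¹`-coefficient (formal residue). -/
theorem casimir_conserved {A : Type*} [CommRing A] [Algebra ℚ A]
    (d D : A → A)
    (hd_add : ∀ a b : A, d (a + b) = d a + d b)
    (hd_mul : ∀ a b : A, d (a * b) = a * d b + d a * b)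
    (hD_add : ∀ a b : A, D (a + b) = D a + D b)
    (hD_mul : ∀ a b : A, D (a * b) = a * D b + D a * b)
    (z zbar H : LaurentPolynomial A)
    (hstring : lax d z zbar = 1)
    (hflow_z : dmap D z = lax d H z)
    (hflow_zbar : dmap D zbar = lax d H zbar)
    (Q : A)
    (hQ : Q = (1/2 : ℚ) • ((zbar * wderiv z).coeff (-1 : ℤ) - (z * wderiv zbar).coeff (-1 : ℤ))) :
    D Q = 0 := by
  have hD0 : D 0 = 0 := by
    have h := hD_add 0 0
    rw [add_zero] at h
    exact left_eq_add.mp h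
  set X := lax d H z with hX
  set Y := lax d H zbar with hY
  -- the string-equation identity
  have hstr : wderiv z * Y - wderiv zbar * X = wderiv H := by
    rw [hX, hY]
    unfold lax at hstring ⊢
    linear_combination wderiv H * hstring
  -- the main algebraic identity
  have e1 : wderiv (zbar * X - z * Y + (H + H)) =
      (zbar * wderiv X + wderiv zbar * X) - (z * wderiv Y + wderiv z * Y)
        + (wderiv H + wderiv H) := by
    rw [wderiv_add, wderiv_sub, wderiv_mul, wderiv_mul, wderiv_add]
  have hmain : zbar * wderiv X + Y * wderiv z - (z * wderiv Y + X * wderiv zbar)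
      = wderiv (zbar * X - z * Y + (H + H)) := by
    linear_combination (2 : LaurentPolynomial A) * hstr - e1
  -- derivatives of the residues
  have hDa : D ((zbar * wderiv z).coeff (-1 : ℤ)) = (zbar * wderiv X + Y * wderiv z).coeff (-1 : ℤ) := by
    rw [← dmap_apply D hD0, dmap_mul D hD0 hD_add hD_mul, dmap_wderiv D hD0 hD_add,
      hflow_z, hflow_zbar]
  have hDb : D ((z * wderiv zbar).coeff (-1 : ℤ)) = (z * wderiv Y + X * wderiv zbar).coeff (-1 : ℤ) := by
    rw [← dmap_apply D hD0, dmap_mul D hD0 hD_add hD_mul, dmap_wderiv D hD0 hD_add,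
      hflow_z, hflow_zbar]
  -- rationality of D
  have hsmul : ∀ (q : ℚ) (a : A), D (q • a) = q • D a := fun q a =>
    map_smul ((AddMonoidHom.mk' D hD_add).toRatLinearMap) q a
  rw [hQ, hsmul]
  have hsub : ∀ a b : A, D (a - b) = D a - D b := fun a b =>
    map_sub (AddMonoidHom.mk' D hD_add) a b
  rw [hsub, hDa, hDb, ← Finsupp.sub_apply, ← AddMonoidAlgebra.coeff_sub, hmain, wderiv_residue, smul_zero]
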